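/- Let λ : ℕ → ℂ with ∑_n ‖λ_n‖ < ∞. Then for every integer k ≥ 1 the Newton identity p_k = (−1)^{k−1} k e_k + ∑_{i=1}^{k−1} (−1)^{k−1+i} e_{k−i} p_i holds. -/

import Mathlib

open Complex Finset


lemma summable_pi_prod (f : ℕ → ℝ) (hf : Summable f) (hnn : 0 ≤ f) :
    ∀ k : ℕ, Summable (fun v : Fin k → ℕ => ∏ j, f (v j)) := by
  intro k
  induction k with
  | zero => exact summable_of_finite_support (Set.Finite.subset (Set.finite_univ) (by simp))
  | succ k ih =>
      have hg' : (0:(Fin k → ℕ) → ℝ) ≤ fun v => ∏ j, f (v j) :=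
        fun v => Finset.prod_nonneg fun j _ => hnn _
      have h2 : Summable (fun x : ℕ × (Fin k → ℕ) => f x.1 * ∏ j, f (x.2 j)) :=
        Summable.mul_of_nonneg (f := f) (g := fun v : Fin k → ℕ => ∏ j, f (v j)) hf ih hnn hg'
      rw [← (Fin.consEquiv (fun _ : Fin (k+1) => ℕ)).summable_iff]
      convert h2 using 1
      funext x
      simp [Fin.consEquiv, Fin.prod_univ_succ]

lemma summable_prod_subsets (lam : ℕ → ℂ) (hsum : Summable fun n => ‖lam n‖) (k : ℕ) :
    Summable (fun S : {S : Finset ℕ // S.card = k} => ∏ i ∈ S.1, lam i) := by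
  set g : (Fin k → ℕ) → ℝ := fun v => ∏ j, ‖lam (v j)‖ with hg
  have hgs : Summable g := summable_pi_prod _ hsum (fun n => norm_nonneg _) k
  set emb : {S : Finset ℕ // S.card = k} → (Fin k → ℕ) :=
    fun S j => (S.1.orderIsoOfFin S.2 j : ℕ) with hemb
  have key : ∀ (S : {S : Finset ℕ // S.card = k}) (x : ℕ) (hx : x ∈ S.1),
      emb S ((S.1.orderIsoOfFin S.2).symm ⟨x, hx⟩) = x := by
    intro S x hx
    simp only [hemb, Finset.coe_orderIsoOfFin_apply]
    rw [← Finset.coe_orderIsoOfFin_apply]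
    rw [OrderIso.apply_symm_apply]
  have hinj : Function.Injective emb := by
    intro S T h
    ext x
    have hS : ∀ (S : {S : Finset ℕ // S.card = k}) (x : ℕ),
        x ∈ S.1 ↔ ∃ j, emb S j = x := by
      intro S x
      constructor
      · intro hx
        exact ⟨(S.1.orderIsoOfFin S.2).symm ⟨x, hx⟩, key S x hx⟩
      · rintro ⟨j, rfl⟩
        exact (S.1.orderIsoOfFin S.2 j).2
    rw [hS, hS, h]
  apply Summable.of_norm_bounded (g := g ∘ emb) (hgs.comp_injective hinj)
  intro S
  rw [norm_prod]
  apply le_of_eq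
  show ∏ i ∈ S.1, ‖lam i‖ = ∏ j, ‖lam (emb S j)‖
  exact (Finset.prod_bij (f := fun i => ‖lam i‖) (g := fun j => ‖lam (emb S j)‖) (fun (i : ℕ) (hi : i ∈ S.1) => (S.1.orderIsoOfFin S.2).symm ⟨i, hi⟩)
    (fun a ha => mem_univ _) (fun a ha b hb h => by
      have := congrArg (fun t => ((S.1.orderIsoOfFin S.2) t : ℕ)) h
      simpa [OrderIso.apply_symm_apply] using this)
    (fun j _ => ⟨(S.1.orderIsoOfFin S.2 j : ℕ), (S.1.orderIsoOfFin S.2 j).2, by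
      apply (S.1.orderIsoOfFin S.2).injective
      apply Subtype.ext
      rw [OrderIso.apply_symm_apply]⟩)
    (fun a ha => by simp only [key S a ha]))
open MvPolynomial

lemma esymm_eval (f : ℕ → ℂ) (N n : ℕ) :
    MvPolynomial.aeval (fun j : Fin N => f j) (MvPolynomial.esymm (Fin N) ℂ n) =
      ∑ S ∈ (Finset.range N).powersetCard n, ∏ i ∈ S, f i := by
  rw [MvPolynomial.aeval_esymm_eq_multiset_esymm, Finset.esymm_map_val]
  conv_rhs => rw [← Nat.Iio_eq_range, ← Fin.map_valEmbedding_univ,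
    Finset.powersetCard_map, Finset.sum_map]
  exact Finset.sum_congr rfl fun t _ => (Finset.prod_map t Fin.valEmbedding f).symm

lemma psum_eval (f : ℕ → ℂ) (N n : ℕ) :
    MvPolynomial.aeval (fun j : Fin N => f j) (MvPolynomial.psum (Fin N) ℂ n) =
      ∑ i ∈ Finset.range N, f i ^ n := by
  simp only [MvPolynomial.psum, map_sum, map_pow, MvPolynomial.aeval_X]
  exact Fin.sum_univ_eq_sum_range (fun i => f i ^ n) N

lemma finite_newton (f : ℕ → ℂ) (N k : ℕ) (hk : 1 ≤ k) :
    ∑ n ∈ Finset.range N, f n ^ k =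
      (-1:ℂ)^(k-1) * k * (∑ S ∈ (Finset.range N).powersetCard k, ∏ i ∈ S, f i) +
      ∑ i ∈ Finset.Icc 1 (k-1), (-1:ℂ)^(k-1+i) *
        (∑ S ∈ (Finset.range N).powersetCard (k-i), ∏ j ∈ S, f j) *
        (∑ n ∈ Finset.range N, f n ^ i) := by
  have h := congrArg (MvPolynomial.aeval (fun j : Fin N => f j))
    (MvPolynomial.psum_eq_mul_esymm_sub_sum (Fin N) ℂ k hk)
  rw [psum_eval, map_sub, map_mul, map_mul, map_sum] at h
  simp only [map_mul, map_pow, map_neg, map_one, map_natCast, esymm_eval, psum_eval] at h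
  rw [h]
  have hsign : (-1:ℂ)^(k+1) = (-1:ℂ)^(k-1) := by
    obtain ⟨m, rfl⟩ := Nat.exists_eq_add_of_le hk
    rw [show 1 + m + 1 = (1 + m - 1) + 2 by omega, pow_add]
    simp
  rw [hsign, sub_eq_add_neg]
  congr 1
  rw [← Finset.sum_neg_distrib]
  refine Finset.sum_nbij' (fun a => a.2) (fun i => (k - i, i)) ?_ ?_ ?_ ?_ ?_
  · rintro ⟨a, b⟩ hab
    simp only [Finset.mem_filter, Finset.HasAntidiagonal.mem_antidiagonal, Set.mem_Ioo] at hab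
    simp only [Finset.mem_Icc]
    omega
  · intro i hi
    simp only [Finset.mem_Icc] at hi
    simp only [Finset.mem_filter, Finset.HasAntidiagonal.mem_antidiagonal, Set.mem_Ioo]
    omega
  · rintro ⟨a, b⟩ hab
    simp only [Finset.mem_filter, Finset.HasAntidiagonal.mem_antidiagonal, Set.mem_Ioo] at hab
    obtain ⟨h1, h2, h3⟩ := hab
    simp only [Prod.mk.injEq]
    exact ⟨by omega, trivial⟩
  · intro i hi; rfl
  · rintro ⟨a, b⟩ hab
    simp only [Finset.mem_filter, Finset.HasAntidiagonal.mem_antidiagonal, Set.mem_Ioo] at hab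
    have hab1 : a = k - b := by omega
    subst hab1
    have : (-1:ℂ)^(k-1+b) = -(-1:ℂ)^(k-b) := by
      have h2 : (k - 1 + b) + 1 = (k - b) + 2*b := by omega
      have := congrArg (fun m => (-1:ℂ)^m) h2
      simp only [pow_add, pow_succ, pow_mul] at this ⊢
      simp at this ⊢
      linear_combination -this
    rw [this]
    ring


lemma summable_pow (lam : ℕ → ℂ) (hsum : Summable fun n => ‖lam n‖) (i : ℕ) (hi : 1 ≤ i) :
    Summable (fun n => lam n ^ i) := by
  have h0 : Filter.Tendsto (fun n => ‖lam n‖) Filter.atTop (nhds 0) :=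
    hsum.tendsto_atTop_zero
  have hev : ∀ᶠ n in Filter.atTop, ‖lam n‖ < 1 := h0.eventually (gt_mem_nhds one_pos)
  apply Summable.of_norm_bounded_eventually (g := fun n => ‖lam n‖) hsum
  rw [Nat.cofinite_eq_atTop]
  filter_upwards [hev] with n hn
  rw [norm_pow]
  exact pow_le_of_le_one (norm_nonneg _) hn.le (by omega)

lemma tendsto_esymm (lam : ℕ → ℂ) (hsum : Summable fun n => ‖lam n‖) (j : ℕ) :
    Filter.Tendsto (fun N => ∑ S ∈ (Finset.range N).powersetCard j, ∏ i ∈ S, lam i)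
      Filter.atTop (nhds (∑' S : {S : Finset ℕ // S.card = j}, ∏ i ∈ S.1, lam i)) := by
  have hf := summable_prod_subsets lam hsum j
  set F : ℕ → Finset {S : Finset ℕ // S.card = j} := fun N =>
    ((Finset.range N).powersetCard j).attach.map
      ⟨fun S => ⟨S.1, (Finset.mem_powersetCard.1 S.2).2⟩,
       fun a b h => by exact Subtype.ext (congrArg (fun x : {S : Finset ℕ // S.card = j} => x.1) h)⟩ with hF
  have hmem : ∀ (N : ℕ) (T : {S : Finset ℕ // S.card = j}),
      T ∈ F N ↔ T.1 ⊆ Finset.range N := by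
    intro N T
    simp only [hF, Finset.mem_map, Finset.mem_attach, Function.Embedding.coeFn_mk, true_and,
      Subtype.exists]
    constructor
    · rintro ⟨S, hS, rfl⟩
      exact (Finset.mem_powersetCard.1 hS).1
    · intro hT
      exact ⟨T.1, Finset.mem_powersetCard.2 ⟨hT, T.2⟩, Subtype.ext rfl⟩
  have hmono : Monotone F := by
    intro N M hNM T hT
    rw [hmem] at hT ⊢
    exact hT.trans (Finset.range_subset_range.2 hNM)
  have hcof : ∀ T : {S : Finset ℕ // S.card = j}, ∃ N, T ∈ F N := by
    intro T
    obtain ⟨N, hN⟩ := T.1.exists_nat_subset_range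
    exact ⟨N, (hmem N T).2 hN⟩
  have htop : Filter.Tendsto F Filter.atTop Filter.atTop :=
    Filter.tendsto_atTop_finset_of_monotone hmono hcof
  have := (hf.hasSum.comp htop)
  apply this.congr
  intro N
  show ∑ T ∈ F N, ∏ i ∈ T.1, lam i = _
  rw [hF]
  simp only [Finset.sum_map, Function.Embedding.coeFn_mk]
  exact Finset.sum_attach ((Finset.range N).powersetCard j) (fun S => ∏ i ∈ S, lam i)


/-- Newton's identities for the power sums and elementary symmetric
sums of an absolutely summable complex sequence. -/
theorem newton_identity_infinite
    (lam : ℕ → ℂ) (hsum : Summable fun n => ‖lam n‖)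
    (p : ℕ → ℂ) (hp : ∀ k, 1 ≤ k → p k = ∑' n, lam n ^ k)
    (e : ℕ → ℂ) (he : ∀ k, e k = ∑' S : {S : Finset ℕ // S.card = k}, ∏ i ∈ S.1, lam i) :
    ∀ k : ℕ, 1 ≤ k →
      p k = (-1 : ℂ) ^ (k - 1) * k * e k +
        ∑ i ∈ Finset.Icc 1 (k - 1), (-1 : ℂ) ^ (k - 1 + i) * e (k - i) * p i := by
  intro k hk
  have hP : ∀ i, 1 ≤ i → Filter.Tendsto (fun N => ∑ n ∈ Finset.range N, lam n ^ i)
      Filter.atTop (nhds (p i)) := by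
    intro i hi
    rw [hp i hi]
    exact (summable_pow lam hsum i hi).hasSum.tendsto_sum_nat
  have hE : ∀ j, Filter.Tendsto (fun N => ∑ S ∈ (Finset.range N).powersetCard j, ∏ i ∈ S, lam i)
      Filter.atTop (nhds (e j)) := by
    intro j
    rw [he j]
    exact tendsto_esymm lam hsum j
  have hR : Filter.Tendsto (fun N =>
      (-1:ℂ)^(k-1) * k * (∑ S ∈ (Finset.range N).powersetCard k, ∏ i ∈ S, lam i) +
      ∑ i ∈ Finset.Icc 1 (k-1), (-1:ℂ)^(k-1+i) *
        (∑ S ∈ (Finset.range N).powersetCard (k-i), ∏ j ∈ S, lam j) *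
        (∑ n ∈ Finset.range N, lam n ^ i)) Filter.atTop
      (nhds ((-1 : ℂ) ^ (k - 1) * k * e k +
        ∑ i ∈ Finset.Icc 1 (k - 1), (-1 : ℂ) ^ (k - 1 + i) * e (k - i) * p i)) := by
    apply Filter.Tendsto.add
    · exact (hE k).const_mul _
    · apply tendsto_finset_sum
      intro i hi
      have hi1 : 1 ≤ i := (Finset.mem_Icc.1 hi).1
      exact ((hE (k-i)).const_mul _).mul (hP i hi1)
  have hLR := hR.congr (fun N => (finite_newton lam N k hk).symm)
  exact tendsto_nhds_unique (hP k hk) hLR
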